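/- Let q be a positive integer and G a group. Then the exponent of ∇^q(G) divides q; that is, x^q = 1 for every x ∈ ∇^q(G). Moreover, ∇^q(G) is abelian, and for all g, h, a, b ∈ G the elements g⊗g and (g⊗h)(h⊗g) commute with a⊗b in G⊗^q G. -/

import Mathlib

/-!
Nonabelian tensor square modulo `q` (Conduché–Ellis / Brown–Loday for `q = 0`),
presented by generators `g ⊗ h` and `{(g,g)}` with the defining relations.
-/

namespace QTensor

/-- Generators of the `q`-tensor square: `t g h` stands for `g ⊗ h`,
and `d g` stands for the symbol `{(g,g)}`. -/
inductive Gen (G : Type) : Type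
  | t : G → G → Gen G
  | d : G → Gen G

variable (G : Type) [Group G]

/-- The word `g ⊗ h` in the free group on the generators. -/
def T (g h : G) : FreeGroup (Gen G) := FreeGroup.of (Gen.t g h)

/-- The word `{(g,g)}` in the free group on the generators. -/
def D (g : G) : FreeGroup (Gen G) := FreeGroup.of (Gen.d g)

/-- The word `∏_{i=1}^{q-1} (g⁻¹ ⊗ (^(g^(1-q+i)) g₁)^i)` appearing in relation (4). -/
def relProd (q : ℕ) (g g₁ : G) : FreeGroup (Gen G) :=
  ((List.range (q - 1)).map (fun j =>
    T G g⁻¹ ((g ^ ((1 : ℤ) - (q : ℤ) + (j + 1 : ℕ)) * g₁ *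
      (g ^ ((1 : ℤ) - (q : ℤ) + (j + 1 : ℕ)))⁻¹) ^ (j + 1)))).prod

/-- The defining relations of the `q`-tensor square.  For `q = 0` the symbols
`{(g,g)}` are killed, so that the group is the Brown–Loday nonabelian tensor
square generated by the `g ⊗ h` subject to relations (1) and (2). -/
def rels (q : ℕ) : Set (FreeGroup (Gen G)) :=
  {r | ∃ g g₁ h : G,
      r = T G (g * g₁) h * (T G (g * g₁ * g⁻¹) (g * h * g⁻¹) * T G g h)⁻¹} ∪
  {r | ∃ g h h₁ : G,
      r = T G g (h * h₁) * (T G g h * T G (h * g * h⁻¹) (h * h₁ * h⁻¹))⁻¹} ∪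
  {r | ∃ g g₁ h₁ : G,
      r = D G g * T G g₁ h₁ * (D G g)⁻¹ *
        (T G (g ^ q * g₁ * (g ^ q)⁻¹) (g ^ q * h₁ * (g ^ q)⁻¹))⁻¹} ∪
  {r | ∃ g g₁ : G,
      r = D G (g * g₁) * (D G g * relProd G q g g₁ * D G g₁)⁻¹} ∪
  {r | ∃ g g₁ : G,
      r = D G g * D G g₁ * (D G g)⁻¹ * (D G g₁)⁻¹ * (T G (g ^ q) (g₁ ^ q))⁻¹} ∪
  {r | ∃ g h : G,
      r = D G (g * h * g⁻¹ * h⁻¹) * ((T G g h) ^ q)⁻¹} ∪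
  {r | q = 0 ∧ ∃ g : G, r = D G g}

/-- The nonabelian tensor square modulo `q`, `G ⊗^q G`. -/
def tensorSquare (q : ℕ) : Type := PresentedGroup (rels G q)

instance (q : ℕ) : Group (tensorSquare G q) := by unfold tensorSquare; infer_instance

/-- The element `g ⊗ h` of `G ⊗^q G`. -/
def tmk (q : ℕ) (g h : G) : tensorSquare G q := PresentedGroup.of (Gen.t g h)

/-- The element `{(g,g)}` of `G ⊗^q G`. -/
def dmk (q : ℕ) (g : G) : tensorSquare G q := PresentedGroup.of (Gen.d g)

/-- `∇^q(G)`, the normal closure of the elements `g ⊗ g` in `G ⊗^q G`. -/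
def nabla (q : ℕ) : Subgroup (tensorSquare G q) :=
  Subgroup.normalClosure {x | ∃ g : G, x = tmk G q g g}

instance (q : ℕ) : (nabla G q).Normal := Subgroup.normalClosure_normal

/-- The exterior square modulo `q`, `G ∧^q G = (G ⊗^q G)/∇^q(G)`. -/
def extSquare (q : ℕ) : Type := tensorSquare G q ⧸ nabla G q

instance (q : ℕ) : Group (extSquare G q) := by unfold extSquare; infer_instance

/-- The element `g ∧ h` of `G ∧^q G`. -/
def wmk (q : ℕ) (g h : G) : extSquare G q := QuotientGroup.mk (tmk G q g h)

/-- The image of the symbol `{(g,g)}` in `G ∧^q G`. -/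
def dwmk (q : ℕ) (g : G) : extSquare G q := QuotientGroup.mk (dmk G q g)

/-- The exterior centre variant `Z^∧_q(G) = {g : g ∧ h = 1 for all h}` (as a set). -/
def Zext (q : ℕ) : Set G := {g | ∀ h : G, wmk G q g h = 1}

/-- `E^∧_q(G) = {g ∈ Z^∧_q(G) : {(g,g)} = 1 in G ∧^q G}` (as a set); for `q = 0`
the second condition is automatic, so `E^∧_0(G) = Z^∧(G)`. -/
def Eext (q : ℕ) : Set G := {g | (∀ h : G, wmk G q g h = 1) ∧ dwmk G q g = 1}

/-- The subgroup `G^q[G,G]` generated by all `q`-th powers and all commutators. -/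
def qPowComm (q : ℕ) : Subgroup G :=
  Subgroup.closure ({x | ∃ g : G, x = g ^ q} ∪ {x | ∃ a b : G, x = a * b * a⁻¹ * b⁻¹})

theorem pow_mem_qPowComm (q : ℕ) (g : G) : g ^ q ∈ qPowComm G q :=
  Subgroup.subset_closure (Or.inl ⟨g, rfl⟩)

theorem commutator_mem_qPowComm (q : ℕ) (a b : G) :
    a * b * a⁻¹ * b⁻¹ ∈ qPowComm G q :=
  Subgroup.subset_closure (Or.inr ⟨a, b, rfl⟩)

open scoped commutatorElement in
theorem mem_commutator (a b : G) : ⁅a, b⁆ ∈ commutator G :=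
  Subgroup.commutator_mem_commutator (Subgroup.mem_top a) (Subgroup.mem_top b)

/-- `M₀^q(G)`: the subgroup of `G ∧^q G` generated by the `x ∧ y` with `[x,y] = 1`.
(It is contained in the `q`-Schur multiplier `M^q(G)`.) -/
def M0 (q : ℕ) : Subgroup (extSquare G q) :=
  Subgroup.closure {x | ∃ a b : G, a * b = b * a ∧ x = wmk G q a b}

/-- `M̂₀^q(G)`: the subgroup of `G ∧^q G` generated by the `x ∧ y` with `[x,y] = 1`
together with the `{(g,g)}` with `g^q = 1`. -/
def M0hat (q : ℕ) : Subgroup (extSquare G q) :=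
  Subgroup.closure
    ({x | ∃ a b : G, a * b = b * a ∧ x = wmk G q a b} ∪
     {x | ∃ g : G, g ^ q = 1 ∧ x = dwmk G q g})

/-- A group `Q` is capable if `Q ≅ E/Z(E)` for some group `E`. -/
def Capable (Q : Type) [Group Q] : Prop :=
  ∃ (E : Type) (_ : Group E), Nonempty (Q ≃* E ⧸ Subgroup.center E)

end QTensor

namespace QTensor

-- Auxiliary development
variable (G : Type) [Group G]

def mkT (q : ℕ) : FreeGroup (Gen G) →* tensorSquare G q :=
  QuotientGroup.mk' (Subgroup.normalClosure (rels G q))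

variable {G}

lemma mkT_t (q : ℕ) (g h : G) : mkT G q (T G g h) = tmk G q g h := rfl
lemma mkT_d (q : ℕ) (g : G) : mkT G q (D G g) = dmk G q g := rfl

lemma mk_rel (q : ℕ) {r : FreeGroup (Gen G)} (hr : r ∈ rels G q) : mkT G q r = 1 := by
  have h2 : r ∈ Subgroup.normalClosure (rels G q) := Subgroup.subset_normalClosure hr
  exact (QuotientGroup.eq_one_iff r).mpr h2

lemma rel1 (q : ℕ) (g g₁ h : G) :
    tmk G q (g * g₁) h = tmk G q (g * g₁ * g⁻¹) (g * h * g⁻¹) * tmk G q g h := by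
  have h1 : (T G (g * g₁) h * (T G (g * g₁ * g⁻¹) (g * h * g⁻¹) * T G g h)⁻¹) ∈ rels G q :=
    Or.inl (Or.inl (Or.inl (Or.inl (Or.inl (Or.inl ⟨g, g₁, h, rfl⟩)))))
  have h2 := mk_rel q h1
  rw [map_mul, map_inv, mul_inv_eq_one, map_mul] at h2
  exact h2

lemma rel2 (q : ℕ) (g h h₁ : G) :
    tmk G q g (h * h₁) = tmk G q g h * tmk G q (h * g * h⁻¹) (h * h₁ * h⁻¹) := by
  have h1 : (T G g (h * h₁) * (T G g h * T G (h * g * h⁻¹) (h * h₁ * h⁻¹))⁻¹) ∈ rels G q :=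
    Or.inl (Or.inl (Or.inl (Or.inl (Or.inl (Or.inr ⟨g, h, h₁, rfl⟩)))))
  have h2 := mk_rel q h1
  rw [map_mul, map_inv, mul_inv_eq_one, map_mul] at h2
  exact h2

lemma rel3 (q : ℕ) (g g₁ h₁ : G) :
    dmk G q g * tmk G q g₁ h₁ * (dmk G q g)⁻¹ =
      tmk G q (g ^ q * g₁ * (g ^ q)⁻¹) (g ^ q * h₁ * (g ^ q)⁻¹) := by
  have h1 : (D G g * T G g₁ h₁ * (D G g)⁻¹ *
      (T G (g ^ q * g₁ * (g ^ q)⁻¹) (g ^ q * h₁ * (g ^ q)⁻¹))⁻¹) ∈ rels G q :=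
    Or.inl (Or.inl (Or.inl (Or.inl (Or.inr ⟨g, g₁, h₁, rfl⟩))))
  have h2 := mk_rel q h1
  rw [map_mul, map_inv, mul_inv_eq_one, map_mul, map_mul, map_inv] at h2
  exact h2

lemma rel4 (q : ℕ) (g g₁ : G) :
    dmk G q (g * g₁) = dmk G q g * mkT G q (relProd G q g g₁) * dmk G q g₁ := by
  have h1 : (D G (g * g₁) * (D G g * relProd G q g g₁ * D G g₁)⁻¹) ∈ rels G q :=
    Or.inl (Or.inl (Or.inl (Or.inr ⟨g, g₁, rfl⟩)))
  have h2 := mk_rel q h1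
  rw [map_mul, map_inv, mul_inv_eq_one, map_mul, map_mul] at h2
  exact h2

lemma rel6 (q : ℕ) (g h : G) :
    dmk G q (g * h * g⁻¹ * h⁻¹) = (tmk G q g h) ^ q := by
  have h1 : (D G (g * h * g⁻¹ * h⁻¹) * ((T G g h) ^ q)⁻¹) ∈ rels G q :=
    Or.inl (Or.inr ⟨g, h, rfl⟩)
  have h2 := mk_rel q h1
  rw [map_mul, map_inv, mul_inv_eq_one, map_pow] at h2
  exact h2


lemma tmk_one_left (q : ℕ) (h : G) : tmk G q 1 h = 1 := by
  have h1 := rel1 q (1 : G) 1 h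
  simp only [one_mul, mul_one, inv_one] at h1
  exact (mul_eq_left.mp h1.symm)

lemma dmk_one (q : ℕ) : dmk G q 1 = (1 : tensorSquare G q) := by
  have h1 := rel4 q (1 : G) 1
  have h2 : mkT G q (relProd G q 1 1) = 1 := by
    rw [relProd, map_list_prod]
    apply List.prod_eq_one
    intro x hx
    simp only [List.map_map, List.mem_map] at hx
    obtain ⟨j, _, rfl⟩ := hx
    simp only [Function.comp_apply, one_zpow, one_mul, inv_one, mul_one, one_pow, mkT_t]
    exact tmk_one_left q 1
  rw [one_mul, h2, mul_one] at h1
  exact (mul_eq_left.mp h1.symm)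

lemma tmk_diag_pow (q : ℕ) (g : G) : (tmk G q g g) ^ q = 1 := by
  have h1 := rel6 q g g
  rw [show g * g * g⁻¹ * g⁻¹ = (1 : G) by group, dmk_one] at h1
  exact h1.symm

/-- The exchange identity derived from relations (1) and (2). -/
lemma exchange (q : ℕ) (g h x y : G) :
    tmk G q (g * h * x * (g * h)⁻¹) (g * h * y * (g * h)⁻¹) * tmk G q g h =
      tmk G q g h * tmk G q (h * g * x * (h * g)⁻¹) (h * g * y * (h * g)⁻¹) := by
  have o1 : tmk G q (g * x) (h * y) =
      tmk G q (g * x * g⁻¹) (g * h * g⁻¹) *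
        tmk G q (g * h * x * (g * h)⁻¹) (g * h * y * (g * h)⁻¹) *
        (tmk G q g h * tmk G q (h * g * h⁻¹) (h * y * h⁻¹)) := by
    rw [rel1 q g x (h * y), rel2 q g h y,
      show g * (h * y) * g⁻¹ = (g * h * g⁻¹) * (g * y * g⁻¹) by group,
      rel2 q (g * x * g⁻¹) (g * h * g⁻¹) (g * y * g⁻¹),
      show (g * h * g⁻¹) * (g * x * g⁻¹) * (g * h * g⁻¹)⁻¹ = g * h * x * (g * h)⁻¹ by group,
      show (g * h * g⁻¹) * (g * y * g⁻¹) * (g * h * g⁻¹)⁻¹ = g * h * y * (g * h)⁻¹ by group]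
  have o2 : tmk G q (g * x) (h * y) =
      tmk G q (g * x * g⁻¹) (g * h * g⁻¹) * tmk G q g h *
        (tmk G q (h * g * x * (h * g)⁻¹) (h * g * y * (h * g)⁻¹) *
          tmk G q (h * g * h⁻¹) (h * y * h⁻¹)) := by
    rw [rel2 q (g * x) h y, rel1 q g x h,
      show h * (g * x) * h⁻¹ = (h * g * h⁻¹) * (h * x * h⁻¹) by group,
      rel1 q (h * g * h⁻¹) (h * x * h⁻¹) (h * y * h⁻¹),
      show (h * g * h⁻¹) * (h * x * h⁻¹) * (h * g * h⁻¹)⁻¹ = h * g * x * (h * g)⁻¹ by group,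
      show (h * g * h⁻¹) * (h * y * h⁻¹) * (h * g * h⁻¹)⁻¹ = h * g * y * (h * g)⁻¹ by group]
  have key : ∀ A P u Q B : tensorSquare G q,
      A * P * (u * B) = A * u * (Q * B) → P * u = u * Q := by
    intro A P u Q B hh
    have h4 : A * (P * u) * B = A * (u * Q) * B := by
      simp only [mul_assoc] at hh ⊢
      exact hh
    exact mul_left_cancel (mul_right_cancel h4)
  exact key _ _ _ _ _ (o1.symm.trans o2)

/-- Conjugation of a tensor by a tensor is the action of the commutator. -/
lemma conj_tmk (q : ℕ) (g h a b : G) :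
    tmk G q g h * tmk G q a b =
      tmk G q (g * h * g⁻¹ * h⁻¹ * a * (g * h * g⁻¹ * h⁻¹)⁻¹)
        (g * h * g⁻¹ * h⁻¹ * b * (g * h * g⁻¹ * h⁻¹)⁻¹) * tmk G q g h := by
  have e := exchange q g h ((h * g)⁻¹ * a * (h * g)) ((h * g)⁻¹ * b * (h * g))
  rw [show h * g * ((h * g)⁻¹ * a * (h * g)) * (h * g)⁻¹ = a by group,
      show h * g * ((h * g)⁻¹ * b * (h * g)) * (h * g)⁻¹ = b by group,
      show g * h * ((h * g)⁻¹ * a * (h * g)) * (g * h)⁻¹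
        = g * h * g⁻¹ * h⁻¹ * a * (g * h * g⁻¹ * h⁻¹)⁻¹ by group,
      show g * h * ((h * g)⁻¹ * b * (h * g)) * (g * h)⁻¹
        = g * h * g⁻¹ * h⁻¹ * b * (g * h * g⁻¹ * h⁻¹)⁻¹ by group] at e
  exact e.symm

lemma diag_comm (q : ℕ) (g a b : G) :
    tmk G q g g * tmk G q a b = tmk G q a b * tmk G q g g := by
  have e := conj_tmk q g g a b
  rw [show g * g * g⁻¹ * g⁻¹ * a * (g * g * g⁻¹ * g⁻¹)⁻¹ = a by group,
      show g * g * g⁻¹ * g⁻¹ * b * (g * g * g⁻¹ * g⁻¹)⁻¹ = b by group] at e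
  exact e

lemma sym_comm (q : ℕ) (g h a b : G) :
    (tmk G q g h * tmk G q h g) * tmk G q a b = tmk G q a b * (tmk G q g h * tmk G q h g) := by
  have e1 := conj_tmk q h g a b
  have e2 := conj_tmk q g h
    (h * g * h⁻¹ * g⁻¹ * a * (h * g * h⁻¹ * g⁻¹)⁻¹)
    (h * g * h⁻¹ * g⁻¹ * b * (h * g * h⁻¹ * g⁻¹)⁻¹)
  rw [show g * h * g⁻¹ * h⁻¹ * (h * g * h⁻¹ * g⁻¹ * a * (h * g * h⁻¹ * g⁻¹)⁻¹) *
        (g * h * g⁻¹ * h⁻¹)⁻¹ = a by group,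
      show g * h * g⁻¹ * h⁻¹ * (h * g * h⁻¹ * g⁻¹ * b * (h * g * h⁻¹ * g⁻¹)⁻¹) *
        (g * h * g⁻¹ * h⁻¹)⁻¹ = b by group] at e2
  have key : ∀ t1 t2 t2' t3 : tensorSquare G q,
      t2 * t3 = t2' * t2 → t1 * t2' = t3 * t1 → (t1 * t2) * t3 = t3 * (t1 * t2) := by
    intro t1 t2 t2' t3 h1 h2
    calc (t1 * t2) * t3 = t1 * (t2 * t3) := mul_assoc _ _ _
      _ = t1 * (t2' * t2) := by rw [h1]
      _ = t1 * t2' * t2 := (mul_assoc _ _ _).symm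
      _ = t3 * t1 * t2 := by rw [h2]
      _ = t3 * (t1 * t2) := mul_assoc _ _ _
  exact key _ _ _ _ e1 e2


variable (G) in
/-- The generating set of `∇^q(G)`. -/
def Sdiag (q : ℕ) : Set (tensorSquare G q) := {x | ∃ g : G, x = tmk G q g g}

lemma conj_Sdiag (q : ℕ) (w : tensorSquare G q) :
    (∀ s ∈ Sdiag G q, w * s * w⁻¹ ∈ Sdiag G q) ∧
    (∀ s ∈ Sdiag G q, w⁻¹ * s * w ∈ Sdiag G q) := by
  obtain ⟨z, rfl⟩ := QuotientGroup.mk'_surjective (Subgroup.normalClosure (rels G q)) w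
  show (∀ s ∈ Sdiag G q, mkT G q z * s * (mkT G q z)⁻¹ ∈ Sdiag G q) ∧
    (∀ s ∈ Sdiag G q, (mkT G q z)⁻¹ * s * mkT G q z ∈ Sdiag G q)
  induction z using FreeGroup.induction_on with
  | C1 =>
    simp only [map_one, one_mul, inv_one, mul_one]
    exact ⟨fun s hs => hs, fun s hs => hs⟩
  | of x =>
    have hpure : (pure x : FreeGroup (Gen G)) = FreeGroup.of x := rfl
    cases x with
    | t a b =>
      constructor <;> intro s hs <;> obtain ⟨g, rfl⟩ := hs
      · refine ⟨g, ?_⟩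
        have hc := diag_comm q g a b
        show tmk G q a b * tmk G q g g * (tmk G q a b)⁻¹ = tmk G q g g
        rw [← hc]; group
      · refine ⟨g, ?_⟩
        have hc := diag_comm q g a b
        show (tmk G q a b)⁻¹ * tmk G q g g * tmk G q a b = tmk G q g g
        rw [mul_assoc, hc, inv_mul_cancel_left]
    | d a =>
      constructor <;> intro s hs <;> obtain ⟨g, rfl⟩ := hs
      · refine ⟨a ^ q * g * (a ^ q)⁻¹, ?_⟩
        show dmk G q a * tmk G q g g * (dmk G q a)⁻¹ =
          tmk G q (a ^ q * g * (a ^ q)⁻¹) (a ^ q * g * (a ^ q)⁻¹)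
        exact rel3 q a g g
      · refine ⟨(a ^ q)⁻¹ * g * a ^ q, ?_⟩
        have h3 := rel3 q a ((a ^ q)⁻¹ * g * a ^ q) ((a ^ q)⁻¹ * g * a ^ q)
        rw [show a ^ q * ((a ^ q)⁻¹ * g * a ^ q) * (a ^ q)⁻¹ = g by group] at h3
        show (dmk G q a)⁻¹ * tmk G q g g * dmk G q a = _
        rw [← h3]; group
  | inv_of x ih =>
    rw [map_inv]
    refine ⟨fun s hs => ?_, fun s hs => ?_⟩
    · have := ih.2 s hs
      simpa [inv_inv] using this
    · have := ih.1 s hs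
      simpa [inv_inv] using this
  | mul z₁ z₂ ih₁ ih₂ =>
    rw [map_mul]
    refine ⟨fun s hs => ?_, fun s hs => ?_⟩
    · rw [show mkT G q z₁ * mkT G q z₂ * s * (mkT G q z₁ * mkT G q z₂)⁻¹
        = mkT G q z₁ * (mkT G q z₂ * s * (mkT G q z₂)⁻¹) * (mkT G q z₁)⁻¹ by group]
      exact ih₁.1 _ (ih₂.1 s hs)
    · rw [show (mkT G q z₁ * mkT G q z₂)⁻¹ * s * (mkT G q z₁ * mkT G q z₂)
        = (mkT G q z₂)⁻¹ * ((mkT G q z₁)⁻¹ * s * mkT G q z₁) * mkT G q z₂ by group]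
      exact ih₂.2 _ (ih₁.2 s hs)

lemma closureSdiag_normal (q : ℕ) : (Subgroup.closure (Sdiag G q)).Normal := by
  constructor
  intro n hn w
  refine Subgroup.closure_induction (fun s hs => ?_) ?_ (fun x y _ _ ihx ihy => ?_)
    (fun x _ ih => ?_) hn
  · exact Subgroup.subset_closure ((conj_Sdiag q w).1 s hs)
  · simpa using Subgroup.one_mem _
  · rw [show w * (x * y) * w⁻¹ = (w * x * w⁻¹) * (w * y * w⁻¹) by group]
    exact Subgroup.mul_mem _ ihx ihy
  · rw [show w * x⁻¹ * w⁻¹ = (w * x * w⁻¹)⁻¹ by group]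
    exact Subgroup.inv_mem _ ih

lemma nabla_eq_closure (q : ℕ) : nabla G q = Subgroup.closure (Sdiag G q) := by
  apply le_antisymm
  · letI := closureSdiag_normal (G := G) q
    exact Subgroup.normalClosure_le_normal Subgroup.subset_closure
  · exact (Subgroup.closure_le _).mpr Subgroup.subset_normalClosure

lemma nabla_comm (q : ℕ) : ∀ x ∈ nabla G q, ∀ y ∈ nabla G q, x * y = y * x := by
  rw [nabla_eq_closure]
  have hcent : Subgroup.closure (Sdiag G q) ≤ Subgroup.centralizer (Sdiag G q) := by
    refine (Subgroup.closure_le _).mpr ?_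
    rintro s ⟨g, rfl⟩
    refine Subgroup.mem_centralizer_iff.mpr ?_
    rintro t ⟨h, rfl⟩
    exact diag_comm q h g g
  intro x hx y hy
  have h1 : Subgroup.closure (Sdiag G q) ≤ Subgroup.centralizer {y} := by
    refine (Subgroup.closure_le _).mpr ?_
    intro s hs
    refine Subgroup.mem_centralizer_iff.mpr ?_
    rintro t rfl
    exact (Subgroup.mem_centralizer_iff.mp (hcent hy) s hs).symm
  exact (Subgroup.mem_centralizer_iff.mp (h1 hx) y rfl).symm

lemma nabla_pow (q : ℕ) : ∀ x ∈ nabla G q, x ^ q = 1 := by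
  intro x hx
  have hx' := hx
  rw [nabla_eq_closure] at hx'
  refine Subgroup.closure_induction (fun s hs => ?_) ?_ (fun a b ha hb iha ihb => ?_)
    (fun a _ ih => ?_) hx'
  · obtain ⟨g, rfl⟩ := hs
    exact tmk_diag_pow q g
  · exact one_pow q
  · have hc : Commute a b := by
      have := nabla_comm q a (by rw [nabla_eq_closure]; exact ha) b
        (by rw [nabla_eq_closure]; exact hb)
      exact this
    rw [hc.mul_pow, iha, ihb, one_mul]
  · rw [inv_pow, ih, inv_one]

end QTensor

open QTensor in
/-- For positive `q`: the exponent of `∇^q(G)` divides `q`; `∇^q(G)` is abelian;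
and the elements `g ⊗ g` and `(g ⊗ h)(h ⊗ g)` commute with every `a ⊗ b`
in `G ⊗^q G`. -/
theorem nabla_exponent_and_comm (q : ℕ) (hq : 0 < q) (G : Type) [Group G] :
    (∀ x ∈ nabla G q, x ^ q = 1) ∧
    (∀ x ∈ nabla G q, ∀ y ∈ nabla G q, x * y = y * x) ∧
    (∀ g h a b : G,
      tmk G q g g * tmk G q a b = tmk G q a b * tmk G q g g ∧
      (tmk G q g h * tmk G q h g) * tmk G q a b
        = tmk G q a b * (tmk G q g h * tmk G q h g)) := by
  exact ⟨nabla_pow q, nabla_comm q, fun g h a b => ⟨diag_comm q g a b, sym_comm q g h a b⟩⟩
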